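/- If l is the length of the lattice Λ(H) (the cardinality of its longest chain minus one) and X is finite, then the ambiguous Littlestone dimension of H satisfies AL(H) ≤ l·|X|. In particular AL(H) ≤ |Y|·|X|. -/

import Mathlib

/-- A `Y`-lattice: a family of subsets of `Y` containing `Y` itself and closed
under binary intersections. -/
def IsYLattice {Y : Type} (L : Set (Set Y)) : Prop :=
  Set.univ ∈ L ∧ ∀ A ∈ L, ∀ B ∈ L, A ∩ B ∈ L

/-- The `Λ`-hull of `A`: the intersection of all members of `Λ` containing `A`. -/
def latHull {Y : Type} (L : Set (Set Y)) (A : Set Y) : Set Y :=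
  ⋂₀ {B | B ∈ L ∧ A ⊆ B}

/-- The `Λ`-complexity of `A`: minimal cardinality of `B ⊆ A` with `A ⊆ hull(B)`. -/
noncomputable def latComplexity {Y : Type} (L : Set (Set Y)) (A : Set Y) : ℕ :=
  sInf {n : ℕ | ∃ B : Set Y, B ⊆ A ∧ B.ncard = n ∧ A ⊆ latHull L B}

/-- The pivot dimension of `Λ`: maximal `Λ`-complexity of an element of `Λ`. -/
noncomputable def PDim {Y : Type} (L : Set (Set Y)) : ℕ :=
  sSup {n : ℕ | ∃ A ∈ L, n = latComplexity L A}

/-- `Λ` shatters `S` if every subset of `S` is a trace `S ∩ C` for some `C ∈ Λ`. -/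
def Shatters {Y : Type} (L : Set (Set Y)) (S : Set Y) : Prop :=
  ∀ B ⊆ S, ∃ C ∈ L, S ∩ C = B

/-- VC dimension of the family `Λ`. -/
noncomputable def VCdim {Y : Type} (L : Set (Set Y)) : ℕ :=
  sSup {n : ℕ | ∃ S : Set Y, Shatters L S ∧ S.ncard = n}

/-- `Λ(H)`: the minimal `Y`-lattice containing every value `h x` for `h ∈ H`. -/
def LamH {X Y : Type} (H : Set (X → Set Y)) : Set (Set Y) :=
  {A | ∀ L : Set (Set Y), IsYLattice L → (∀ h ∈ H, ∀ x : X, h x ∈ L) → A ∈ L}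

/-- A finite rooted tree: vertices, a root, and a parent map under which every
vertex reaches the root. -/
structure RTree where
  V : Type
  [fin : Fintype V]
  root : V
  parent : V → V
  parent_root : parent root = root
  reaches : ∀ v : V, ∃ k : ℕ, parent^[k] v = root

namespace RTree

/-- Children of a vertex (the root is not a child of anything). -/
def children (t : RTree) (v : t.V) : Set t.V := {w | t.parent w = v ∧ w ≠ t.root}

def IsLeaf (t : RTree) (v : t.V) : Prop := t.children v = ∅

/-- `a` is an ancestor (or equal to) `u`. -/
def Anc (t : RTree) (a u : t.V) : Prop := ∃ k : ℕ, t.parent^[k] u = a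

noncomputable def depthOf (t : RTree) (v : t.V) : ℕ := sInf {k : ℕ | t.parent^[k] v = t.root}

noncomputable def depth (t : RTree) : ℕ := sSup {n : ℕ | ∃ v : t.V, n = t.depthOf v}

end RTree

/-- An ambiguous shattered `H`-tree: internal vertices carry instances, non-root
vertices (identified with the edges to their parents) carry labels, distinct among
siblings, leaves carry hypotheses from `H` compatible with all edge labels above
them, and `E0` selects exactly one child edge of each internal vertex. -/
structure AmbTree (X Y : Type) (H : Set (X → Set Y)) where
  t : RTree
  xlab : t.V → X
  ylab : t.V → Y
  hlab : t.V → (X → Set Y)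
  E0 : Set t.V
  e0_ne_root : ∀ a ∈ E0, a ≠ t.root
  e0_unique : ∀ v : t.V, (t.children v).Nonempty → ∃! a : t.V, a ∈ t.children v ∩ E0
  sib_distinct : ∀ a b : t.V, a ≠ t.root → b ≠ t.root →
    t.parent a = t.parent b → a ≠ b → ylab a ≠ ylab b
  hlab_mem : ∀ u : t.V, t.IsLeaf u → hlab u ∈ H
  path_mem : ∀ u a : t.V, t.IsLeaf u → t.Anc a u → a ≠ t.root →
    ylab a ∈ hlab u (xlab (t.parent a))

namespace AmbTree

variable {X Y : Type} {H : Set (X → Set Y)}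

/-- Edge `a` (on the root-to-`u` path) is relevant to leaf `u`. -/
def Relevant (T : AmbTree X Y H) (a u : T.t.V) : Prop :=
  a ≠ T.t.root ∧ T.t.Anc a u ∧
    (a ∉ T.E0 ∨ ∃ b : T.t.V, T.t.parent b = T.t.parent a ∧ b ≠ T.t.root ∧
      T.ylab b ∉ T.hlab u (T.xlab (T.t.parent a)))

noncomputable def relCount (T : AmbTree X Y H) (u : T.t.V) : ℕ :=
  {a : T.t.V | T.Relevant a u}.ncard

/-- Rank: the minimum over leaves of the number of relevant edges. -/
noncomputable def rank (T : AmbTree X Y H) : ℕ :=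
  sInf {n : ℕ | ∃ u : T.t.V, T.t.IsLeaf u ∧ n = T.relCount u}

noncomputable def depth (T : AmbTree X Y H) : ℕ := T.t.depth

end AmbTree


/-! ### Auxiliary development -/

attribute [instance] RTree.fin

namespace RTree

variable (t : RTree)

lemma iterate_parent_root (k : ℕ) : t.parent^[k] t.root = t.root := by
  induction k with
  | zero => rfl
  | succ n ih => rw [Function.iterate_succ_apply, t.parent_root, ih]

lemma anc_refl (v : t.V) : t.Anc v v := ⟨0, rfl⟩

lemma anc_trans {a b c : t.V} (h1 : t.Anc a b) (h2 : t.Anc b c) : t.Anc a c := by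
  obtain ⟨k, hk⟩ := h1; obtain ⟨m, hm⟩ := h2
  exact ⟨k + m, by rw [Function.iterate_add_apply, hm, hk]⟩

lemma eq_root_of_anc_root {a : t.V} (h : t.Anc a t.root) : a = t.root := by
  obtain ⟨k, hk⟩ := h; rw [iterate_parent_root] at hk; exact hk.symm

lemma anc_parent {a u : t.V} (h : t.Anc a u) : t.Anc (t.parent a) u := by
  obtain ⟨k, hk⟩ := h
  exact ⟨k + 1, by rw [Function.iterate_succ_apply', hk]⟩

lemma anc_parent_self (a : t.V) : t.Anc (t.parent a) a := ⟨1, by simp⟩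

lemma iterate_depthOf (v : t.V) : t.parent^[t.depthOf v] v = t.root :=
  Nat.sInf_mem (t.reaches v)

lemma depthOf_child {w : t.V} (hw : w ≠ t.root) :
    t.depthOf w = t.depthOf (t.parent w) + 1 := by
  apply le_antisymm
  · apply Nat.sInf_le
    show t.parent^[t.depthOf (t.parent w) + 1] w = t.root
    rw [Function.iterate_succ_apply]
    exact t.iterate_depthOf (t.parent w)
  · have hmem : t.parent^[t.depthOf w] w = t.root := t.iterate_depthOf w
    rcases Nat.eq_zero_or_pos (t.depthOf w) with h0 | hpos
    · exfalso; rw [h0] at hmem; exact hw hmem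
    · obtain ⟨m, hm⟩ := Nat.exists_eq_add_of_lt hpos
      have hm' : t.depthOf w = m + 1 := by omega
      rw [hm', Function.iterate_succ_apply] at hmem
      have : t.depthOf (t.parent w) ≤ m := Nat.sInf_le hmem
      omega

lemma iterate_ne_of_lt {v : t.V} {i j : ℕ} (hij : i < j) (hj : j ≤ t.depthOf v) :
    t.parent^[i] v ≠ t.parent^[j] v := by
  intro heq
  have hroot : t.parent^[t.depthOf v - j + i] v = t.root := by
    have : t.parent^[t.depthOf v - j] (t.parent^[j] v) = t.root := by
      rw [← Function.iterate_add_apply, show t.depthOf v - j + j = t.depthOf v by omega]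
      exact t.iterate_depthOf v
    rw [← heq, ← Function.iterate_add_apply] at this
    exact this
  have hle : t.depthOf v ≤ t.depthOf v - j + i :=
    Nat.sInf_le (show t.depthOf v - j + i ∈ {k : ℕ | t.parent^[k] v = t.root} from hroot)
  omega

lemma depthOf_lt_card (v : t.V) : t.depthOf v < Fintype.card t.V := by
  have hinj : Function.Injective (fun i : Fin (t.depthOf v + 1) => t.parent^[i.val] v) := by
    intro i j hij
    by_contra hne
    have hne' : i.val ≠ j.val := fun h => hne (Fin.ext h)
    rcases lt_or_gt_of_ne hne' with h | h
    · exact t.iterate_ne_of_lt h (by omega) hij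
    · exact t.iterate_ne_of_lt h (by omega) hij.symm
  have := Fintype.card_le_of_injective _ hinj
  simpa using this

lemma anc_total {a b u : t.V} (h1 : t.Anc a u) (h2 : t.Anc b u) :
    t.Anc a b ∨ t.Anc b a := by
  obtain ⟨k, hk⟩ := h1; obtain ⟨m, hm⟩ := h2
  rcases le_total k m with h | h
  · right
    exact ⟨m - k, by rw [← hk, ← Function.iterate_add_apply,
      show m - k + k = m by omega, hm]⟩
  · left
    exact ⟨k - m, by rw [← hm, ← Function.iterate_add_apply,
      show k - m + m = k by omega, hk]⟩

end RTree

lemma isYLattice_LamH {X Y : Type} (H : Set (X → Set Y)) : IsYLattice (LamH H) :=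
  ⟨fun _ hL _ => hL.1,
   fun A hA B hB L hL hv => hL.2 A (hA L hL hv) B (hB L hL hv)⟩

lemma valMem_LamH {X Y : Type} {H : Set (X → Set Y)} {h : X → Set Y}
    (hh : h ∈ H) (x : X) : h x ∈ LamH H :=
  fun _ hL hv => hv h hh x

lemma sInter_mem_LamH {X Y : Type} (H : Set (X → Set Y)) {S : Set (Set Y)}
    (hS : S.Finite) (h : ∀ A ∈ S, A ∈ LamH H) : ⋂₀ S ∈ LamH H := by
  refine Set.Finite.induction_on
    (motive := fun S _ => (∀ A ∈ S, A ∈ LamH H) → ⋂₀ S ∈ LamH H) S hS ?_ ?_ h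
  · intro _
    rw [Set.sInter_empty]; exact (isYLattice_LamH H).1
  · intro a s _ _ ih hins
    rw [Set.sInter_insert]
    exact (isYLattice_LamH H).2 _ (hins _ (Set.mem_insert _ _)) _
      (ih fun B hB => hins B (Set.mem_insert_of_mem _ hB))

/-- The height of `A` inside the lattice `LamH H`: the longest strict chain in
`LamH H` ending at `A`. -/
noncomputable def htL {X Y : Type} (H : Set (X → Set Y)) (A : Set Y) : ℕ :=
  sSup {k : ℕ | ∃ c : Fin (k + 1) → Set Y,
    (∀ i, c i ∈ LamH H) ∧ StrictMono c ∧ c (Fin.last k) = A}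

section Ht

variable {X Y : Type} {H : Set (X → Set Y)} {l : ℕ}

lemma htSet_bdd (hl : ∀ (k : ℕ) (c : Fin (k + 1) → Set Y),
      (∀ i, c i ∈ LamH H) → StrictMono c → k ≤ l) (A : Set Y) :
    ∀ k ∈ {k : ℕ | ∃ c : Fin (k + 1) → Set Y,
      (∀ i, c i ∈ LamH H) ∧ StrictMono c ∧ c (Fin.last k) = A}, k ≤ l := by
  rintro k ⟨c, h1, h2, _⟩
  exact hl k c h1 h2

lemma htL_le (hl : ∀ (k : ℕ) (c : Fin (k + 1) → Set Y),
      (∀ i, c i ∈ LamH H) → StrictMono c → k ≤ l) (A : Set Y) : htL H A ≤ l := by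
  unfold htL
  by_cases hne : {k : ℕ | ∃ c : Fin (k + 1) → Set Y,
      (∀ i, c i ∈ LamH H) ∧ StrictMono c ∧ c (Fin.last k) = A}.Nonempty
  · exact csSup_le hne (htSet_bdd hl A)
  · rw [Set.not_nonempty_iff_eq_empty] at hne
    rw [hne]
    simp

lemma htL_zero_mem {A : Set Y} (hA : A ∈ LamH H) :
    0 ∈ {k : ℕ | ∃ c : Fin (k + 1) → Set Y,
      (∀ i, c i ∈ LamH H) ∧ StrictMono c ∧ c (Fin.last k) = A} :=
  ⟨fun _ => A, fun _ => hA,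
    fun i j hij => absurd (Fin.lt_def.mp hij) (by omega), rfl⟩

lemma htL_lt_htL (hl : ∀ (k : ℕ) (c : Fin (k + 1) → Set Y),
      (∀ i, c i ∈ LamH H) → StrictMono c → k ≤ l)
    {A B : Set Y} (hA : A ∈ LamH H) (hB : B ∈ LamH H)
    (hAB : A ⊂ B) : htL H A < htL H B := by
  have hbddA : BddAbove {k : ℕ | ∃ c : Fin (k + 1) → Set Y,
      (∀ i, c i ∈ LamH H) ∧ StrictMono c ∧ c (Fin.last k) = A} :=
    ⟨l, htSet_bdd hl A⟩
  have hbddB : BddAbove {k : ℕ | ∃ c : Fin (k + 1) → Set Y,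
      (∀ i, c i ∈ LamH H) ∧ StrictMono c ∧ c (Fin.last k) = B} :=
    ⟨l, htSet_bdd hl B⟩
  have hmem : ∃ c : Fin (htL H A + 1) → Set Y,
      (∀ i, c i ∈ LamH H) ∧ StrictMono c ∧ c (Fin.last (htL H A)) = A :=
    Nat.sSup_mem ⟨0, htL_zero_mem hA⟩ hbddA
  obtain ⟨c, hc1, hc2, hc3⟩ := hmem
  have hmemB : htL H A + 1 ∈ {m : ℕ | ∃ c : Fin (m + 1) → Set Y,
      (∀ i, c i ∈ LamH H) ∧ StrictMono c ∧ c (Fin.last m) = B} := by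
    refine ⟨Fin.snoc c B, ?_, ?_, ?_⟩
    · intro i
      refine Fin.lastCases ?_ ?_ i
      · rw [Fin.snoc_last]; exact hB
      · intro j; rw [Fin.snoc_castSucc]; exact hc1 j
    · rw [Fin.strictMono_iff_lt_succ]
      intro i
      by_cases hi : i = Fin.last (htL H A)
      · subst hi
        rw [Fin.succ_last, Fin.snoc_last, Fin.snoc_castSucc, hc3]
        exact hAB
      · have hi' : i.val < htL H A := by
          have h1 : i.val < htL H A + 1 := i.isLt
          have h2 : i.val ≠ htL H A := fun h => hi (Fin.ext h)
          omega
        have e1 : (i.succ : Fin (htL H A + 2)) =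
            Fin.castSucc ⟨i.val + 1, by omega⟩ := by
          ext; simp
        rw [e1, Fin.snoc_castSucc, Fin.snoc_castSucc]
        exact hc2 (by rw [Fin.lt_def]; simp)
    · rw [Fin.snoc_last]
  have hfin : htL H A + 1 ≤ htL H B := le_csSup hbddB hmemB
  omega

end Ht

namespace AmbTree

variable {X Y : Type} {H : Set (X → Set Y)}

/-- The leaves lying (weakly) below `v`. -/
def LeavesBelow (T : AmbTree X Y H) (v : T.t.V) : Set T.t.V :=
  {u | T.t.IsLeaf u ∧ T.t.Anc v u}

/-- Version-space intersection: the intersection of `hlab u x` over leaves below `v`. -/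
noncomputable def G (T : AmbTree X Y H) (v : T.t.V) (x : X) : Set Y :=
  ⋂₀ ((fun u => T.hlab u x) '' T.LeavesBelow v)

lemma G_mem_LamH (T : AmbTree X Y H) (v : T.t.V) (x : X) : T.G v x ∈ LamH H := by
  haveI := T.t.fin
  apply sInter_mem_LamH
  · exact (Set.toFinite _).image _
  · rintro A ⟨u, ⟨hu, _⟩, rfl⟩
    exact valMem_LamH (T.hlab_mem u hu) x

lemma G_subset (T : AmbTree X Y H) {v u : T.t.V} (hu : u ∈ T.LeavesBelow v) (x : X) :
    T.G v x ⊆ T.hlab u x :=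
  Set.sInter_subset_of_mem ⟨u, hu, rfl⟩

lemma G_mono (T : AmbTree X Y H) {p q : T.t.V} (h : T.t.Anc p q) (x : X) :
    T.G p x ⊆ T.G q x := by
  apply Set.sInter_subset_sInter
  apply Set.image_mono
  rintro u ⟨hu1, hu2⟩
  exact ⟨hu1, T.t.anc_trans h hu2⟩

lemma ylab_mem_G (T : AmbTree X Y H) {a : T.t.V} (ha : a ≠ T.t.root) :
    T.ylab a ∈ T.G a (T.xlab (T.t.parent a)) := by
  rintro A ⟨u', ⟨hu1, hu2⟩, rfl⟩
  exact T.path_mem u' a hu1 hu2 ha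

/-- The property guaranteed for every edge chosen by the greedy descent. -/
def Good (T : AmbTree X Y H) (a : T.t.V) : Prop :=
  a ≠ T.t.root ∧
    (T.ylab a ∉ T.G (T.t.parent a) (T.xlab (T.t.parent a)) ∨
      (a ∈ T.E0 ∧ ∀ b ∈ T.t.children (T.t.parent a),
        T.ylab b ∈ T.G (T.t.parent a) (T.xlab (T.t.parent a))))

open Classical in
noncomputable def pickChild (T : AmbTree X Y H) (v : T.t.V)
    (h : (T.t.children v).Nonempty) : T.t.V :=
  if h2 : ∃ b ∈ T.t.children v, T.ylab b ∉ T.G v (T.xlab v) then h2.choose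
  else (T.e0_unique v h).exists.choose

lemma pickChild_mem (T : AmbTree X Y H) (v : T.t.V) (h : (T.t.children v).Nonempty) :
    T.pickChild v h ∈ T.t.children v := by
  unfold pickChild
  split_ifs with h2
  · exact h2.choose_spec.1
  · exact (T.e0_unique v h).exists.choose_spec.1

lemma pickChild_spec (T : AmbTree X Y H) (v : T.t.V) (h : (T.t.children v).Nonempty) :
    T.ylab (T.pickChild v h) ∉ T.G v (T.xlab v) ∨
      (T.pickChild v h ∈ T.E0 ∧ ∀ b ∈ T.t.children v, T.ylab b ∈ T.G v (T.xlab v)) := by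
  unfold pickChild
  split_ifs with h2
  · exact Or.inl h2.choose_spec.2
  · push_neg at h2
    exact Or.inr ⟨(T.e0_unique v h).exists.choose_spec.2, h2⟩

lemma pickChild_good (T : AmbTree X Y H) (v : T.t.V) (h : (T.t.children v).Nonempty) :
    T.Good (T.pickChild v h) := by
  have hpar : T.t.parent (T.pickChild v h) = v := (T.pickChild_mem v h).1
  refine ⟨(T.pickChild_mem v h).2, ?_⟩
  rw [hpar]
  exact T.pickChild_spec v h

open Classical in
noncomputable def descend (T : AmbTree X Y H) : ℕ → T.t.V → T.t.V
  | 0, v => v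
  | n + 1, v =>
    if h : (T.t.children v).Nonempty then T.descend n (T.pickChild v h) else v

lemma descend_leaf_or (T : AmbTree X Y H) (n : ℕ) (v : T.t.V) :
    T.t.IsLeaf (T.descend n v) ∨
      T.t.depthOf v + n ≤ T.t.depthOf (T.descend n v) := by
  induction n generalizing v with
  | zero => right; simp [descend]
  | succ n ih =>
    simp only [descend]
    split_ifs with h
    · rcases ih (T.pickChild v h) with h1 | h2
      · left; exact h1
      · right
        have hd : T.t.depthOf (T.pickChild v h) = T.t.depthOf v + 1 := by
          rw [T.t.depthOf_child (T.pickChild_mem v h).2, (T.pickChild_mem v h).1]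
        omega
    · left; exact Set.not_nonempty_iff_eq_empty.mp h

lemma descend_inv (T : AmbTree X Y H) (n : ℕ) (v : T.t.V) (a : T.t.V)
    (ha : T.t.Anc a (T.descend n v)) : T.t.Anc a v ∨ T.Good a := by
  induction n generalizing v with
  | zero => left; exact ha
  | succ n ih =>
    simp only [descend] at ha
    split_ifs at ha with h
    · rcases ih _ ha with h1 | h2
      · obtain ⟨k, hk⟩ := h1
        cases k with
        | zero =>
          right
          have he : T.pickChild v h = a := by simpa using hk
          rw [← he]
          exact T.pickChild_good v h
        | succ m =>
          left
          exact ⟨m, by rw [← hk, Function.iterate_succ_apply, (T.pickChild_mem v h).1]⟩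
      · right; exact h2
    · left; exact ha

noncomputable def theLeaf (T : AmbTree X Y H) : T.t.V :=
  T.descend (Fintype.card T.t.V) T.t.root

lemma theLeaf_isLeaf (T : AmbTree X Y H) : T.t.IsLeaf T.theLeaf := by
  rcases T.descend_leaf_or (Fintype.card T.t.V) T.t.root with h | h
  · exact h
  · exfalso
    have h2 := T.t.depthOf_lt_card (T.descend (Fintype.card T.t.V) T.t.root)
    have h3 : T.t.depthOf T.t.root + Fintype.card T.t.V ≤
        T.t.depthOf (T.descend (Fintype.card T.t.V) T.t.root) := h
    omega

lemma good_of_anc_theLeaf (T : AmbTree X Y H) {a : T.t.V}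
    (ha : T.t.Anc a T.theLeaf) (hroot : a ≠ T.t.root) : T.Good a := by
  rcases T.descend_inv _ _ a ha with h | h
  · exact absurd (T.t.eq_root_of_anc_root h) hroot
  · exact h

lemma relevant_not_mem (T : AmbTree X Y H) {a : T.t.V}
    (hrel : T.Relevant a T.theLeaf) :
    T.ylab a ∉ T.G (T.t.parent a) (T.xlab (T.t.parent a)) := by
  obtain ⟨hroot, hanc, hdis⟩ := hrel
  rcases (T.good_of_anc_theLeaf hanc hroot).2 with h | ⟨hE0, hall⟩
  · exact h
  · exfalso
    rcases hdis with h1 | ⟨b, hb1, hb2, hb3⟩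
    · exact h1 hE0
    · exact hb3 (T.G_subset ⟨T.theLeaf_isLeaf, T.t.anc_parent hanc⟩
        (T.xlab (T.t.parent a)) (hall b ⟨hb1, hb2⟩))

lemma relevant_ssubset (T : AmbTree X Y H) {a : T.t.V}
    (hrel : T.Relevant a T.theLeaf) :
    T.G (T.t.parent a) (T.xlab (T.t.parent a)) ⊂ T.G a (T.xlab (T.t.parent a)) := by
  rw [Set.ssubset_iff_subset_ne]
  constructor
  · exact T.G_mono (T.t.anc_parent_self a) _
  · intro heq
    exact T.relevant_not_mem hrel (heq ▸ T.ylab_mem_G hrel.1)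

end AmbTree

section Main

variable {X Y : Type} [Fintype X] [Fintype Y] {H : Set (X → Set Y)} {l : ℕ}

lemma key_lt
    (hl : ∀ (k : ℕ) (c : Fin (k + 1) → Set Y),
      (∀ i, c i ∈ LamH H) → StrictMono c → k ≤ l)
    (T : AmbTree X Y H) {a b : T.t.V}
    (ha : T.Relevant a T.theLeaf) (hb : T.Relevant b T.theLeaf)
    (hanc : T.t.Anc b a) (hne : a ≠ b)
    (hx : T.xlab (T.t.parent a) = T.xlab (T.t.parent b)) :
    htL H (T.G b (T.xlab (T.t.parent b))) < htL H (T.G a (T.xlab (T.t.parent a))) := by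
  rw [← hx]
  set x := T.xlab (T.t.parent a) with hxdef
  -- b is a strict ancestor of a, hence an ancestor of parent a
  obtain ⟨j, hj⟩ := hanc
  have hj0 : j ≠ 0 := by
    intro h; subst h; exact hne (by simpa using hj)
  obtain ⟨m, rfl⟩ : ∃ m, j = m + 1 := ⟨j - 1, by omega⟩
  have hbpar : T.t.Anc b (T.t.parent a) :=
    ⟨m, by rw [← hj, Function.iterate_succ_apply]⟩
  have hsub : T.G b x ⊆ T.G (T.t.parent a) x := T.G_mono hbpar x
  have hss : T.G b x ⊂ T.G a x := by
    rw [Set.ssubset_iff_subset_ne]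
    refine ⟨(hsub.trans (T.relevant_ssubset ha).1), ?_⟩
    intro heq
    exact T.relevant_not_mem ha (hsub (heq ▸ T.ylab_mem_G ha.1))
  exact htL_lt_htL hl (T.G_mem_LamH b x) (T.G_mem_LamH a x) hss

lemma main_bound
    (hl : ∀ (k : ℕ) (c : Fin (k + 1) → Set Y),
      (∀ i, c i ∈ LamH H) → StrictMono c → k ≤ l)
    (T : AmbTree X Y H) : T.rank ≤ l * Fintype.card X := by
  classical
  haveI := T.t.fin
  set u := T.theLeaf with hu
  have hle : T.relCount u ≤ l * Fintype.card X := by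
    set s : Set T.t.V := {a : T.t.V | T.Relevant a u} with hs
    set f : T.t.V → X × ℕ :=
      fun a => (T.xlab (T.t.parent a), htL H (T.G a (T.xlab (T.t.parent a)))) with hf
    have hinj : Set.InjOn f s := by
      intro a haa b hbb hfab
      by_contra hne
      have hxab : T.xlab (T.t.parent a) = T.xlab (T.t.parent b) :=
        congrArg Prod.fst hfab
      have hhtab : htL H (T.G a (T.xlab (T.t.parent a)))
          = htL H (T.G b (T.xlab (T.t.parent b))) := congrArg Prod.snd hfab
      have haa' : T.Relevant a u := haa
      have hbb' : T.Relevant b u := hbb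
      rcases T.t.anc_total haa'.2.1 hbb'.2.1 with h | h
      · have := key_lt hl T hbb' haa' h (Ne.symm hne) hxab.symm
        omega
      · have := key_lt hl T haa' hbb' h hne hxab
        omega
    have hsub : f '' s ⊆ ↑((Finset.univ : Finset X) ×ˢ Finset.Icc 1 l) := by
      rintro p ⟨a, haa, rfl⟩
      have haa' : T.Relevant a u := haa
      simp only [Finset.coe_product, Set.mem_prod, Finset.mem_coe,
        Finset.mem_univ, Finset.coe_Icc, Set.mem_Icc, true_and]
      constructor
      · have := htL_lt_htL hl
          (T.G_mem_LamH (T.t.parent a) (T.xlab (T.t.parent a)))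
          (T.G_mem_LamH a (T.xlab (T.t.parent a)))
          (T.relevant_ssubset haa')
        show 1 ≤ htL H (T.G a (T.xlab (T.t.parent a)))
        omega
      · exact htL_le hl _
    calc T.relCount u = s.ncard := rfl
      _ = (f '' s).ncard := (Set.ncard_image_of_injOn hinj).symm
      _ ≤ (((Finset.univ : Finset X) ×ˢ Finset.Icc 1 l : Finset (X × ℕ)) : Set (X × ℕ)).ncard :=
          Set.ncard_le_ncard hsub (Finset.finite_toSet _)
      _ = ((Finset.univ : Finset X) ×ˢ Finset.Icc 1 l).card := Set.ncard_coe_finset _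
      _ = Fintype.card X * l := by
          rw [Finset.card_product, Nat.card_Icc, Finset.card_univ]
          simp
      _ = l * Fintype.card X := mul_comm _ _
  exact le_trans (Nat.sInf_le ⟨u, T.theLeaf_isLeaf, rfl⟩) hle

lemma chain_card_bound (k : ℕ) (c : Fin (k + 1) → Set Y) (hc : StrictMono c) :
    k ≤ Fintype.card Y := by
  have hmono : StrictMono fun i => (c i).ncard := fun i j hij =>
    Set.ncard_lt_ncard (hc hij) (Set.toFinite _)
  have hbd : ∀ i, (c i).ncard < Fintype.card Y + 1 := by
    intro i
    have h1 : (c i).ncard ≤ (Set.univ : Set Y).ncard :=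
      Set.ncard_le_ncard (Set.subset_univ _) (Set.toFinite _)
    have h2 : (Set.univ : Set Y).ncard = Fintype.card Y := by
      rw [Set.ncard_univ, Nat.card_eq_fintype_card]
    omega
  have hinj : Function.Injective
      (fun i : Fin (k + 1) => (⟨(c i).ncard, hbd i⟩ : Fin (Fintype.card Y + 1))) := by
    intro i j hij
    exact hmono.injective (by simpa using congrArg Fin.val hij)
  have := Fintype.card_le_of_injective _ hinj
  simpa using this

end Main

/-- if every chain in the lattice `Λ(H)` has at most `l + 1` elements
(i.e. the length of `Λ(H)` is at most `l`) and `X` is finite, then every ambiguous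
shattered `H`-tree has rank at most `l·|X|`; in particular the ambiguous Littlestone
dimension is at most `|Y|·|X|`. -/
theorem rank_le_latticeLength_mul_card {X Y : Type} [Fintype X] [Fintype Y]
    (H : Set (X → Set Y)) (l : ℕ)
    (hl : ∀ (k : ℕ) (c : Fin (k + 1) → Set Y),
      (∀ i, c i ∈ LamH H) → StrictMono c → k ≤ l) :
    (∀ T : AmbTree X Y H, T.rank ≤ l * Fintype.card X) ∧
      (∀ T : AmbTree X Y H, T.rank ≤ Fintype.card Y * Fintype.card X) := by
  constructor
  · exact main_bound hl
  · exact main_bound (fun k c _ hc => chain_card_bound k c hc)
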